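/- Let E be a set and let k·F_A(E) be the k-vector space with basis the angularly E-decorated rooted forests (with arbitrary, possibly repeated, decorations from E). Then k·F_A(E), equipped with the product ⋄ and the grafting operator B⁺, is an associative unital Rota-Baxter algebra of weight λ: ⋄ is associative with unit •, and B⁺(F) ⋄ B⁺(G) = B⁺( B⁺(F) ⋄ G + F ⋄ B⁺(G) + λ·(F ⋄ G) ) for all F, G ∈ k·F_A(E). -/

import Mathlib

/-!
Preamble: angularly decorated planar rooted trees and forests, the species `ADF` of
pure angularly decorated forests, the product `⋄`, the grafting operator `B⁺`,
and the augmentation `ε`, following Foissy–Guo–Peng–Xie–Zhang,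
"Species of Rota-Baxter algebras by rooted trees, twisted bialgebras and Fock functors".
-/

attribute [local instance 10] Classical.propDecidable

-- Angularly decorated planar rooted trees (`ATree`) and forests (`AForest`) with
-- angles decorated by elements of `E`.
mutual
  inductive ATree (E : Type) : Type where
    | leaf : ATree E
    | graft : AForest E → ATree E
  inductive AForest (E : Type) : Type where
    | single : ATree E → AForest E
    | cons : ATree E → E → AForest E → AForest E
end

mutual
  /-- The depth of an angularly decorated tree. -/
  def ATree.depth {E : Type} : ATree E → ℕ
    | .leaf => 0
    | .graft F => AForest.depth F + 1
  /-- The depth of an angularly decorated forest. -/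
  def AForest.depth {E : Type} : AForest E → ℕ
    | .single T => ATree.depth T
    | .cons T _ G => max (ATree.depth T) (AForest.depth G)
end

mutual
  /-- The list of angle decorations of a tree, from left to right. -/
  def ATree.decs {E : Type} : ATree E → List E
    | .leaf => []
    | .graft F => AForest.decs F
  /-- The list of angle decorations of a forest, from left to right. -/
  def AForest.decs {E : Type} : AForest E → List E
    | .single T => ATree.decs T
    | .cons T x G => ATree.decs T ++ x :: AForest.decs G
end

mutual
  /-- Relabelling the angle decorations of a tree along a map. -/
  def ATree.relabel {E E' : Type} (f : E → E') : ATree E → ATree E'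
    | .leaf => .leaf
    | .graft F => .graft (AForest.relabel f F)
  /-- Relabelling the angle decorations of a forest along a map. -/
  def AForest.relabel {E E' : Type} (f : E → E') : AForest E → AForest E'
    | .single T => .single (ATree.relabel f T)
    | .cons T x G => .cons (ATree.relabel f T) (f x) (AForest.relabel f G)
end

/-- The single-vertex tree `•`, as a forest. -/
def bulletF (E : Type) : AForest E := .single .leaf

/-- The product `⋄` of angularly decorated forests, with values in linear combinations
of angularly decorated forests.  It is defined by induction on the sum of depths:
`• ⋄ F' = F'`, `F ⋄ • = F`,
`(T x G) ⋄ F' = T x (G ⋄ F')`,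
and for trees `B⁺(F) ⋄ B⁺(F') = B⁺(B⁺(F) ⋄ F') + B⁺(F ⋄ B⁺(F')) + λ B⁺(F ⋄ F')`,
placed back into the surrounding forest. -/
noncomputable def forestMul {k : Type} [Field k] {E : Type} (lam : k) :
    AForest E → AForest E → (AForest E →₀ k)
  | .single .leaf, F' => Finsupp.single F' 1
  | F, .single .leaf => Finsupp.single F 1
  | .cons T x G, F' =>
      Finsupp.mapDomain (fun H => AForest.cons T x H) (forestMul lam G F')
  | .single (.graft F), .cons .leaf y G' =>
      Finsupp.single (AForest.cons (ATree.graft F) y G') 1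
  | .single (.graft F), .cons (.graft F') y G' =>
      Finsupp.mapDomain (fun S => AForest.cons S y G')
        (Finsupp.mapDomain ATree.graft
          (forestMul lam (AForest.single (ATree.graft F)) F' +
           forestMul lam F (AForest.single (ATree.graft F')) +
           lam • forestMul lam F F'))
  | .single (.graft F), .single (.graft F') =>
      Finsupp.mapDomain AForest.single
        (Finsupp.mapDomain ATree.graft
          (forestMul lam (AForest.single (ATree.graft F)) F' +
           forestMul lam F (AForest.single (ATree.graft F')) +
           lam • forestMul lam F F'))
termination_by F F' => (AForest.depth F + AForest.depth F', sizeOf F + sizeOf F')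
decreasing_by
  all_goals
    simp only [AForest.depth, ATree.depth, AForest.cons.sizeOf_spec, AForest.single.sizeOf_spec,
      ATree.graft.sizeOf_spec, ATree.leaf.sizeOf_spec]
    rw [Prod.lex_def]
    omega

/-- A forest over the decoration set `X` is pure if each element of `X` decorates
exactly one of its angles. -/
def IsPure {E : Type} (F : AForest E) : Prop :=
  F.decs.Nodup ∧ ∀ x : E, x ∈ F.decs

/-- Pure angularly `X`-decorated rooted forests. -/
def PureForest (E : Type) : Type := {F : AForest E // IsPure F}

/-- The vector space spanned by all angularly `E`-decorated forests. -/
abbrev RawADF (k : Type) [Field k] (E : Type) : Type := AForest E →₀ k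

/-- `ADF[X]`: the vector space with basis the pure angularly `X`-decorated forests. -/
abbrev ADF (k : Type) [Field k] (E : Type) : Type := PureForest E →₀ k

variable (k : Type) [Field k]

/-- The projection from the span of all forests onto `ADF[X]` (discarding non-pure forests). -/
noncomputable def toPureL (E : Type) : RawADF k E →ₗ[k] ADF k E where
  toFun f := Finsupp.subtypeDomain IsPure f
  map_add' _ _ := Finsupp.subtypeDomain_add
  map_smul' _ _ := Finsupp.ext fun _ => rfl

/-- The inclusion of `ADF[X]` into the span of all forests. -/
noncomputable def rawOfL (E : Type) : ADF k E →ₗ[k] RawADF k E :=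
  Finsupp.lmapDomain k k Subtype.val

/-- Relabelling decorations, on linear combinations of forests. -/
noncomputable def rawRelabelL {E E' : Type} (f : E → E') : RawADF k E →ₗ[k] RawADF k E' :=
  Finsupp.lmapDomain k k (AForest.relabel f)

/-- The grafting operator `B⁺` on linear combinations of forests. -/
noncomputable def rawGraftL (E : Type) : RawADF k E →ₗ[k] RawADF k E :=
  Finsupp.lmapDomain k k (fun F => AForest.single (ATree.graft F))

/-- The Rota-Baxter operator `R_X = B⁺` on `ADF[X]`. -/
noncomputable def RadfL (E : Type) : ADF k E →ₗ[k] ADF k E :=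
  (toPureL k E).comp ((rawGraftL k E).comp (rawOfL k E))

/-- `ADF[σ]`: the action of a bijection `σ : X ≃ Y` on `ADF[X]`. -/
noncomputable def ADFmapL {E E' : Type} (σ : E ≃ E') : ADF k E →ₗ[k] ADF k E' :=
  (toPureL k E').comp ((rawRelabelL k σ).comp (rawOfL k E))

/-- The augmentation `ε_X : ADF[X] → k`, the coefficient of the single-vertex tree `•`. -/
noncomputable def epsL (E : Type) : ADF k E →ₗ[k] k :=
  (Finsupp.lapply (bulletF E)).comp (rawOfL k E)

/-- The bilinear extension of the product `⋄` to linear combinations of forests. -/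
noncomputable def rawMulL {E : Type} (lam : k) : RawADF k E →ₗ[k] RawADF k E →ₗ[k] RawADF k E :=
  Finsupp.lsum k fun F =>
    LinearMap.toSpanSingleton k (RawADF k E →ₗ[k] RawADF k E)
      (Finsupp.lsum k fun G => LinearMap.toSpanSingleton k (RawADF k E) (forestMul lam F G))

/-- `ADF[X] → ADF[X ⊔ Y]`-part of the product. -/
noncomputable def inclL (X Y : Type) : ADF k X →ₗ[k] RawADF k (X ⊕ Y) :=
  (rawRelabelL k Sum.inl).comp (rawOfL k X)

/-- `ADF[Y] → ADF[X ⊔ Y]`-part of the product. -/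
noncomputable def inclR (X Y : Type) : ADF k Y →ₗ[k] RawADF k (X ⊕ Y) :=
  (rawRelabelL k Sum.inr).comp (rawOfL k Y)

/-- The multiplication `m_{X,Y} : ADF[X] ⊗ ADF[Y] → ADF[X ⊔ Y]`, `F ⊗ G ↦ F ⋄ G`
(as a bilinear map). -/
noncomputable def mulADF (lam : k) (X Y : Type) :
    ADF k X →ₗ[k] ADF k Y →ₗ[k] ADF k (X ⊕ Y) :=
  ((((rawMulL k lam).comp (inclL k X Y)).compl₂ (inclR k X Y)).compr₂ (toPureL k (X ⊕ Y)))

theorem isPure_bulletF (E : Type) [IsEmpty E] : IsPure (bulletF E) :=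
  ⟨by simp [bulletF, AForest.decs, ATree.decs], fun x => (IsEmpty.false x).elim⟩

/-- The unit `•` of `ADF`, an element of `ADF[∅]`. -/
noncomputable def bulletADF (E : Type) [IsEmpty E] : ADF k E :=
  Finsupp.single ⟨bulletF E, isPure_bulletF E⟩ 1

/-- The two-leaf forest `• x •` whose unique angle is decorated by
the unique element `x` of a singleton set `X`. -/
def genF (E : Type) [Unique E] : AForest E :=
  .cons .leaf default (.single .leaf)

theorem isPure_genF (E : Type) [Unique E] : IsPure (genF E) := by
  constructor
  · simp [genF, AForest.decs, ATree.decs]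
  · intro x
    simp [genF, AForest.decs, ATree.decs, Unique.eq_default x]

/-- The generator `• x •` of `ADF[{x}]`. -/
noncomputable def genADF (E : Type) [Unique E] : ADF k E :=
  Finsupp.single ⟨genF E, isPure_genF E⟩ 1

/-- The map `k → ADF[X]`, `c ↦ c • bullet` if `X` is empty, and `0` otherwise. -/
noncomputable def etaADF (E : Type) : k →ₗ[k] ADF k E :=
  dite (IsEmpty E)
    (fun h => LinearMap.toSpanSingleton k (ADF k E) (@bulletADF k _ E h))
    (fun _ => 0)

section RBAux

variable {k : Type} [Field k] {E : Type} (lam : k)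

private lemma fm_bullet_left (F' : AForest E) :
    forestMul lam (.single .leaf) F' = Finsupp.single F' 1 := by
  rw [forestMul]

private lemma fm_bullet_right (F : AForest E) :
    forestMul lam F (.single .leaf) = Finsupp.single F 1 := by
  match F with
  | .single .leaf => rw [forestMul]
  | .single (.graft A) => rw [forestMul] <;> simp
  | .cons T x G => rw [forestMul] <;> simp

private lemma fm_cons (T : ATree E) (x : E) (G G' : AForest E) :
    forestMul lam (.cons T x G) G' =
      Finsupp.mapDomain (fun L => AForest.cons T x L) (forestMul lam G G') := by
  match G' with
  | .single .leaf =>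
    rw [forestMul]
    · rw [fm_bullet_right, Finsupp.mapDomain_single]
    · simp
  | .single (.graft A) => rw [forestMul] <;> simp
  | .cons T' y G'' => rw [forestMul] <;> simp

private lemma fm_sg_cl (A : AForest E) (y : E) (G' : AForest E) :
    forestMul lam (.single (.graft A)) (.cons .leaf y G') =
      Finsupp.single (AForest.cons (ATree.graft A) y G') 1 := by
  rw [forestMul]

/-- The three-term Rota–Baxter combination of two basis forests. -/
private noncomputable def Pfin (lam : k) (A B : AForest E) : RawADF k E :=
  forestMul lam (.single (.graft A)) B + forestMul lam A (.single (.graft B)) +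
    lam • forestMul lam A B

private lemma fm_sg_cg (A B : AForest E) (y : E) (G' : AForest E) :
    forestMul lam (.single (.graft A)) (.cons (.graft B) y G') =
      Finsupp.mapDomain (fun S => AForest.cons S y G')
        (Finsupp.mapDomain ATree.graft (Pfin lam A B)) := by
  rw [forestMul]; rfl

private lemma fm_sg_sg (A B : AForest E) :
    forestMul lam (.single (.graft A)) (.single (.graft B)) =
      Finsupp.mapDomain AForest.single
        (Finsupp.mapDomain ATree.graft (Pfin lam A B)) := by
  rw [forestMul]; rfl

private lemma single_eq_smul (F : AForest E) (c : k) :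
    (Finsupp.single F c : RawADF k E) = c • Finsupp.single F 1 := by
  rw [Finsupp.smul_single, smul_eq_mul, mul_one]

private lemma mulL_ss (F G : AForest E) :
    rawMulL k lam (Finsupp.single F 1) (Finsupp.single G 1) = forestMul lam F G := by
  simp [rawMulL, LinearMap.toSpanSingleton_apply]

private lemma grL_single (F : AForest E) (c : k) :
    rawGraftL k E (Finsupp.single F c) =
      Finsupp.single (AForest.single (ATree.graft F)) c := by
  simp [rawGraftL, Finsupp.mapDomain_single]

private lemma grL_apply (p : RawADF k E) :
    rawGraftL k E p =
      Finsupp.mapDomain (fun F => AForest.single (ATree.graft F)) p := rfl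

private lemma fm_sg_sg' (A B : AForest E) :
    forestMul lam (.single (.graft A)) (.single (.graft B)) =
      rawGraftL k E (Pfin lam A B) := by
  rw [fm_sg_sg, ← Finsupp.mapDomain_comp, grL_apply]
  rfl

private lemma mulL_bullet_left (f : RawADF k E) :
    rawMulL k lam (Finsupp.single (AForest.single ATree.leaf) 1) f = f := by
  induction f using Finsupp.induction_linear with
  | zero => simp
  | add f g ihf ihg => rw [map_add, ihf, ihg]
  | single F c =>
    rw [single_eq_smul F c, map_smul, mulL_ss, fm_bullet_left, ← single_eq_smul]

private lemma mulL_bullet_right (f : RawADF k E) :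
    rawMulL k lam f (Finsupp.single (AForest.single ATree.leaf) 1) = f := by
  induction f using Finsupp.induction_linear with
  | zero => simp
  | add f g ihf ihg => rw [map_add, LinearMap.add_apply, ihf, ihg]
  | single F c =>
    rw [single_eq_smul F c, map_smul, LinearMap.smul_apply, mulL_ss, fm_bullet_right,
      ← single_eq_smul]

/-- The bilinear Rota–Baxter combination
`P(f,g) = B⁺(f) ⋄ g + f ⋄ B⁺(g) + λ (f ⋄ g)`. -/
private noncomputable def Pmap (lam : k) : RawADF k E →ₗ[k] RawADF k E →ₗ[k] RawADF k E :=
  (rawMulL k lam).comp (rawGraftL k E) + (rawMulL k lam).compl₂ (rawGraftL k E) +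
    lam • rawMulL k lam

private lemma Pmap_apply (f g : RawADF k E) :
    Pmap lam f g =
      rawMulL k lam (rawGraftL k E f) g + rawMulL k lam f (rawGraftL k E g) +
        lam • rawMulL k lam f g := by
  simp [Pmap, LinearMap.add_apply, LinearMap.smul_apply]

private lemma Pmap_ss (A B : AForest E) :
    Pmap lam (Finsupp.single A 1) (Finsupp.single B 1) = Pfin lam A B := by
  rw [Pmap_apply, grL_single, grL_single, mulL_ss, mulL_ss, mulL_ss]
  simp only [Pfin]

/-- The Rota–Baxter identity on linear combinations of forests. -/
private lemma RBraw (f g : RawADF k E) :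
    rawMulL k lam (rawGraftL k E f) (rawGraftL k E g) =
      rawGraftL k E (Pmap lam f g) := by
  induction f using Finsupp.induction_linear with
  | zero => simp
  | add f1 f2 ih1 ih2 =>
    simp only [map_add, LinearMap.add_apply, ih1, ih2]
  | single F c =>
    induction g using Finsupp.induction_linear with
    | zero => simp
    | add g1 g2 ih1 ih2 => simp only [map_add, ih1, ih2]
    | single G d =>
      rw [single_eq_smul F c, single_eq_smul G d]
      simp only [map_smul, LinearMap.smul_apply]
      rw [grL_single F 1, grL_single G 1, mulL_ss, fm_sg_sg', Pmap_ss]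

private noncomputable def consMul (y : E) :
    RawADF k E →ₗ[k] RawADF k E →ₗ[k] RawADF k E :=
  Finsupp.lsum k fun K => LinearMap.toSpanSingleton k (RawADF k E →ₗ[k] RawADF k E)
    (Finsupp.lmapDomain k k (fun L => AForest.cons (ATree.graft K) y L))

private lemma consMul_single_left (y : E) (K : AForest E) (c : k) (h : RawADF k E) :
    consMul y (Finsupp.single K c) h =
      c • Finsupp.mapDomain (fun L => AForest.cons (ATree.graft K) y L) h := by
  simp [consMul, LinearMap.toSpanSingleton_apply]

private lemma consMul_one_left (y : E) (K : AForest E) (h : RawADF k E) :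
    consMul y (Finsupp.single K 1) h =
      Finsupp.mapDomain (fun L => AForest.cons (ATree.graft K) y L) h := by
  rw [consMul_single_left, one_smul]

private lemma consMul_single_right (y : E) (p : RawADF k E) (L : AForest E) :
    consMul y p (Finsupp.single L 1) =
      Finsupp.mapDomain (fun K => AForest.cons (ATree.graft K) y L) p := by
  induction p using Finsupp.induction_linear with
  | zero => simp
  | add p q ihp ihq =>
    rw [map_add, LinearMap.add_apply, ihp, ihq, Finsupp.mapDomain_add]
  | single K c =>
    rw [consMul_single_left, Finsupp.mapDomain_single, Finsupp.mapDomain_single]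
    simp [Finsupp.smul_single]

private lemma fm_sg_cg' (A B : AForest E) (y : E) (G' : AForest E) :
    forestMul lam (.single (.graft A)) (.cons (.graft B) y G') =
      consMul y (Pfin lam A B) (Finsupp.single G' 1) := by
  rw [fm_sg_cg, ← Finsupp.mapDomain_comp, consMul_single_right]
  rfl

private lemma mulL_cons_left (T : ATree E) (x : E) (F₂ : AForest E) (h : RawADF k E) :
    rawMulL k lam (Finsupp.single (AForest.cons T x F₂) 1) h =
      Finsupp.mapDomain (fun L => AForest.cons T x L)
        (rawMulL k lam (Finsupp.single F₂ 1) h) := by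
  induction h using Finsupp.induction_linear with
  | zero => simp
  | add f g ihf ihg => rw [map_add, ihf, ihg, map_add, Finsupp.mapDomain_add]
  | single H c =>
    rw [single_eq_smul H c, map_smul, map_smul, mulL_ss, mulL_ss, fm_cons,
      Finsupp.mapDomain_smul]

private lemma mulL_mapcons_left (T : ATree E) (x : E) (f : RawADF k E) (H : AForest E) :
    rawMulL k lam (Finsupp.mapDomain (fun L => AForest.cons T x L) f)
        (Finsupp.single H 1) =
      Finsupp.mapDomain (fun L => AForest.cons T x L)
        (rawMulL k lam f (Finsupp.single H 1)) := by
  induction f using Finsupp.induction_linear with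
  | zero => simp
  | add f g ihf ihg =>
    rw [Finsupp.mapDomain_add, map_add, LinearMap.add_apply, ihf, ihg, map_add,
      LinearMap.add_apply, Finsupp.mapDomain_add]
  | single K c =>
    rw [Finsupp.mapDomain_single, single_eq_smul (AForest.cons T x K) c, single_eq_smul K c,
      map_smul, map_smul, LinearMap.smul_apply, LinearMap.smul_apply, mulL_ss, mulL_ss, fm_cons,
      Finsupp.mapDomain_smul]

private lemma mulL_sg_consleaf (A : AForest E) (y : E) (h : RawADF k E) :
    rawMulL k lam (Finsupp.single (AForest.single (ATree.graft A)) 1)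
        (Finsupp.mapDomain (fun L => AForest.cons ATree.leaf y L) h) =
      Finsupp.mapDomain (fun L => AForest.cons (ATree.graft A) y L) h := by
  induction h using Finsupp.induction_linear with
  | zero => simp
  | add f g ihf ihg =>
    rw [Finsupp.mapDomain_add, map_add, ihf, ihg, Finsupp.mapDomain_add]
  | single L c =>
    rw [Finsupp.mapDomain_single, single_eq_smul (AForest.cons ATree.leaf y L) c, map_smul,
      mulL_ss, fm_sg_cl, Finsupp.mapDomain_single]
    simp [Finsupp.smul_single]

private lemma mulL_consMul_left (y : E) (p : RawADF k E) (G₂ H : AForest E) :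
    rawMulL k lam (consMul y p (Finsupp.single G₂ 1)) (Finsupp.single H 1) =
      consMul y p (forestMul lam G₂ H) := by
  induction p using Finsupp.induction_linear with
  | zero => simp
  | add p q ihp ihq =>
    simp only [map_add, LinearMap.add_apply, ihp, ihq]
  | single K c =>
    rw [single_eq_smul K c]
    simp only [map_smul, LinearMap.smul_apply]
    rw [consMul_one_left, Finsupp.mapDomain_single, mulL_ss, fm_cons, ← consMul_one_left]

private lemma mulL_sg_consMulB (A B : AForest E) (y : E) (h : RawADF k E) :
    rawMulL k lam (Finsupp.single (AForest.single (ATree.graft A)) 1)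
        (consMul y (Finsupp.single B 1) h) =
      consMul y (Pfin lam A B) h := by
  induction h using Finsupp.induction_linear with
  | zero => simp
  | add f g ihf ihg => rw [map_add, map_add, ihf, ihg, map_add]
  | single L c =>
    rw [single_eq_smul L c]
    simp only [map_smul]
    rw [consMul_one_left, Finsupp.mapDomain_single, mulL_ss, fm_sg_cg']

private lemma mulL_graft_consleaf (p : RawADF k E) (y : E) (H₂ : AForest E) :
    rawMulL k lam (rawGraftL k E p) (Finsupp.single (AForest.cons ATree.leaf y H₂) 1) =
      consMul y p (Finsupp.single H₂ 1) := by
  induction p using Finsupp.induction_linear with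
  | zero => simp
  | add p q ihp ihq =>
    simp only [map_add, LinearMap.add_apply, ihp, ihq]
  | single K c =>
    rw [single_eq_smul K c]
    simp only [map_smul, LinearMap.smul_apply]
    rw [grL_single K 1, mulL_ss, fm_sg_cl, consMul_single_right, Finsupp.mapDomain_single]

private lemma mulL_graft_consgraft (p : RawADF k E) (C : AForest E) (y : E) (H₂ : AForest E) :
    rawMulL k lam (rawGraftL k E p)
        (Finsupp.single (AForest.cons (ATree.graft C) y H₂) 1) =
      consMul y (Pmap lam p (Finsupp.single C 1)) (Finsupp.single H₂ 1) := by
  induction p using Finsupp.induction_linear with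
  | zero => simp
  | add p q ihp ihq =>
    simp only [map_add, LinearMap.add_apply, ihp, ihq]
  | single K c =>
    rw [single_eq_smul K c]
    simp only [map_smul, LinearMap.smul_apply]
    rw [grL_single K 1, mulL_ss, fm_sg_cg', Pmap_ss]

private lemma mulL_sg_consMul (A : AForest E) (y : E) (q : RawADF k E) (H₂ : AForest E) :
    rawMulL k lam (Finsupp.single (AForest.single (ATree.graft A)) 1)
        (consMul y q (Finsupp.single H₂ 1)) =
      consMul y (Pmap lam (Finsupp.single A 1) q) (Finsupp.single H₂ 1) := by
  induction q using Finsupp.induction_linear with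
  | zero => simp
  | add p q ihp ihq =>
    simp only [map_add, LinearMap.add_apply, ihp, ihq]
  | single K c =>
    rw [single_eq_smul K c]
    simp only [map_smul, LinearMap.smul_apply]
    rw [consMul_single_right, Finsupp.mapDomain_single, mulL_ss, fm_sg_cg', Pmap_ss]

end RBAux
section RBAux2

variable {k : Type} [Field k] {E : Type}

/-- Associativity of the RB double product, given associativity of `⋄` on the
relevant smaller triples. -/
private lemma star_lemma (lam : k) (A B C : AForest E)
    (h1 : rawMulL k lam (forestMul lam (.single (.graft A)) (.single (.graft B)))
            (Finsupp.single C 1) =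
          rawMulL k lam (Finsupp.single (AForest.single (ATree.graft A)) 1)
            (forestMul lam (.single (.graft B)) C))
    (h2 : rawMulL k lam (forestMul lam (.single (.graft A)) B)
            (Finsupp.single (AForest.single (ATree.graft C)) 1) =
          rawMulL k lam (Finsupp.single (AForest.single (ATree.graft A)) 1)
            (forestMul lam B (.single (.graft C))))
    (h3 : rawMulL k lam (forestMul lam A (.single (.graft B)))
            (Finsupp.single (AForest.single (ATree.graft C)) 1) =
          rawMulL k lam (Finsupp.single A 1)
            (forestMul lam (.single (.graft B)) (.single (.graft C))))
    (h4 : rawMulL k lam (forestMul lam A B)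
            (Finsupp.single (AForest.single (ATree.graft C)) 1) =
          rawMulL k lam (Finsupp.single A 1) (forestMul lam B (.single (.graft C))))
    (h5 : rawMulL k lam (forestMul lam (.single (.graft A)) B) (Finsupp.single C 1) =
          rawMulL k lam (Finsupp.single (AForest.single (ATree.graft A)) 1)
            (forestMul lam B C))
    (h6 : rawMulL k lam (forestMul lam A (.single (.graft B))) (Finsupp.single C 1) =
          rawMulL k lam (Finsupp.single A 1) (forestMul lam (.single (.graft B)) C))
    (h7 : rawMulL k lam (forestMul lam A B) (Finsupp.single C 1) =
          rawMulL k lam (Finsupp.single A 1) (forestMul lam B C)) :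
    Pmap lam (Pmap lam (Finsupp.single A 1) (Finsupp.single B 1)) (Finsupp.single C 1) =
      Pmap lam (Finsupp.single A 1) (Pmap lam (Finsupp.single B 1) (Finsupp.single C 1)) := by
  rw [Pmap_apply lam (Pmap lam (Finsupp.single A 1) (Finsupp.single B 1)),
    Pmap_apply lam (Finsupp.single A 1) (Pmap lam (Finsupp.single B 1) (Finsupp.single C 1)),
    ← RBraw, ← RBraw, grL_single A 1, grL_single B 1, grL_single C 1, mulL_ss, mulL_ss,
    Pmap_ss, Pmap_ss]
  simp only [Pfin, map_add, LinearMap.add_apply, map_smul, LinearMap.smul_apply, smul_add]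
  rw [h1, h2, h3, h4, h5, h6, h7]
  module

private theorem assocA (lam : k) (F G H : AForest E) :
    rawMulL k lam (forestMul lam F G) (Finsupp.single H 1) =
      rawMulL k lam (Finsupp.single F 1) (forestMul lam G H) :=
  match F, G, H with
  | .single .leaf, G, H => by
    rw [fm_bullet_left, mulL_ss, mulL_bullet_left]
  | F, .single .leaf, H => by
    rw [fm_bullet_right, fm_bullet_left]
  | F, G, .single .leaf => by
    rw [fm_bullet_right, mulL_bullet_right, mulL_ss]
  | .cons T x F₂, G, H => by
    rw [fm_cons, mulL_mapcons_left, assocA lam F₂ G H, ← mulL_cons_left]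
  | .single (.graft A), .cons .leaf y G₂, H => by
    rw [fm_sg_cl, mulL_ss, fm_cons, fm_cons, mulL_sg_consleaf]
  | .single (.graft A), .cons (.graft B) y G₂, H => by
    rw [fm_sg_cg', mulL_consMul_left, fm_cons, ← consMul_one_left, mulL_sg_consMulB]
  | .single (.graft A), .single (.graft B), .cons .leaf y H₂ => by
    rw [fm_sg_sg', mulL_graft_consleaf, fm_sg_cl, mulL_ss, fm_sg_cg']
  | .single (.graft A), .single (.graft B), .cons (.graft C) y H₂ => by
    rw [fm_sg_sg' lam A B, ← Pmap_ss lam A B, mulL_graft_consgraft, fm_sg_cg' lam B C,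
      ← Pmap_ss lam B C, mulL_sg_consMul,
      star_lemma lam A B C
        (assocA lam (.single (.graft A)) (.single (.graft B)) C)
        (assocA lam (.single (.graft A)) B (.single (.graft C)))
        (assocA lam A (.single (.graft B)) (.single (.graft C)))
        (assocA lam A B (.single (.graft C)))
        (assocA lam (.single (.graft A)) B C)
        (assocA lam A (.single (.graft B)) C)
        (assocA lam A B C)]
  | .single (.graft A), .single (.graft B), .single (.graft C) => by
    rw [fm_sg_sg' lam A B, fm_sg_sg' lam B C, ← Pmap_ss lam A B, ← Pmap_ss lam B C,
      show (Finsupp.single (AForest.single (ATree.graft C)) 1 : RawADF k E) =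
          rawGraftL k E (Finsupp.single C 1) from (grL_single C 1).symm,
      show (Finsupp.single (AForest.single (ATree.graft A)) 1 : RawADF k E) =
          rawGraftL k E (Finsupp.single A 1) from (grL_single A 1).symm,
      RBraw, RBraw,
      star_lemma lam A B C
        (assocA lam (.single (.graft A)) (.single (.graft B)) C)
        (assocA lam (.single (.graft A)) B (.single (.graft C)))
        (assocA lam A (.single (.graft B)) (.single (.graft C)))
        (assocA lam A B (.single (.graft C)))
        (assocA lam (.single (.graft A)) B C)
        (assocA lam A (.single (.graft B)) C)
        (assocA lam A B C)]
termination_by (AForest.depth F + AForest.depth G + AForest.depth H,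
  sizeOf F + sizeOf G + sizeOf H)
decreasing_by
  all_goals
    simp only [AForest.depth, ATree.depth, AForest.cons.sizeOf_spec, AForest.single.sizeOf_spec,
      ATree.graft.sizeOf_spec, ATree.leaf.sizeOf_spec]
    rw [Prod.lex_def]
    omega

end RBAux2
/-- For a set `E`, the vector space `k·F_A(E)` with basis the angularly
`E`-decorated rooted forests (arbitrary, possibly repeated, decorations), equipped with the
product `⋄` and the grafting operator `B⁺`, is an associative unitary Rota-Baxter algebra of
weight `λ`: `⋄` is associative with unit `•`, and
`B⁺(F) ⋄ B⁺(G) = B⁺(B⁺(F) ⋄ G + F ⋄ B⁺(G) + λ·(F ⋄ G))`. -/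
theorem raw_adf_rota_baxter_algebra (lam : k) (E : Type) :
    -- associativity of `⋄`
    (∀ F G H : RawADF k E,
        rawMulL k lam (rawMulL k lam F G) H = rawMulL k lam F (rawMulL k lam G H))
    ∧
    -- `•` is a two-sided unit
    (∀ F : RawADF k E,
        rawMulL k lam (Finsupp.single (bulletF E) 1) F = F
        ∧ rawMulL k lam F (Finsupp.single (bulletF E) 1) = F)
    ∧
    -- the Rota-Baxter identity of weight `λ` for `B⁺`
    (∀ F G : RawADF k E,
        rawMulL k lam (rawGraftL k E F) (rawGraftL k E G) =
          rawGraftL k E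
            (rawMulL k lam (rawGraftL k E F) G + rawMulL k lam F (rawGraftL k E G)
              + lam • rawMulL k lam F G)) := by
  refine ⟨?_, ?_, ?_⟩
  · intro f g h
    induction f using Finsupp.induction_linear with
    | zero => simp
    | add f1 f2 ih1 ih2 => simp only [map_add, LinearMap.add_apply, ih1, ih2]
    | single F c =>
      induction g using Finsupp.induction_linear with
      | zero => simp
      | add g1 g2 ih1 ih2 => simp only [map_add, LinearMap.add_apply, ih1, ih2]
      | single G d =>
        induction h using Finsupp.induction_linear with
        | zero => simp
        | add h1 h2 ih1 ih2 => simp only [map_add, ih1, ih2]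
        | single H e =>
          rw [single_eq_smul F c, single_eq_smul G d, single_eq_smul H e]
          simp only [map_smul, LinearMap.smul_apply]
          rw [mulL_ss, mulL_ss, assocA]
  · intro f
    exact ⟨mulL_bullet_left lam f, mulL_bullet_right lam f⟩
  · intro f g
    rw [RBraw, Pmap_apply]
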